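/- Let G be a finite Fitting-free group and N a normal subgroup of G. Then Soc(G) = Soc(N) × Soc(C_G(Soc(N))), i.e., the socle of G is the internal direct product of the socle of N and the socle of the centralizer of Soc(N) in G. -/

import Mathlib

def IsMinimalNormal {G : Type*} [Group G] (N : Subgroup G) : Prop :=
  N ≠ ⊥ ∧ N.Normal ∧ ∀ M : Subgroup G, M.Normal → M ≤ N → M = ⊥ ∨ M = N

def socle (G : Type*) [Group G] : Subgroup G :=
  ⨆ N ∈ {N : Subgroup G | IsMinimalNormal N}, N

def FittingFree (G : Type*) [Group G] : Prop :=
  ∀ N : Subgroup G, N.Normal → IsMulCommutative ↥N → N = ⊥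

section Aux

variable {G : Type*} [Group G]

/-- `B` is invariant under conjugation by elements of `K`. -/
def ConjInvIn (K B : Subgroup G) : Prop := ∀ k ∈ K, ∀ x ∈ B, k * x * k⁻¹ ∈ B

/-- `B` corresponds to a minimal normal subgroup of `K`, expressed at the level of `G`. -/
def MinNormalIn (K B : Subgroup G) : Prop :=
  B ≠ ⊥ ∧ B ≤ K ∧ ConjInvIn K B ∧
  ∀ B' : Subgroup G, B' ≤ B → ConjInvIn K B' → B' = ⊥ ∨ B' = B

lemma subgroupOf_normal_of_conjInvIn {K B : Subgroup G} (h : ConjInvIn K B) :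
    (B.subgroupOf K).Normal := by
  constructor
  intro n hn g
  rw [Subgroup.mem_subgroupOf] at hn ⊢
  exact h g g.2 n hn

lemma conjInvIn_of_map_normal {K : Subgroup G} {B : Subgroup ↥K} (hB : B.Normal) :
    ConjInvIn K (B.map K.subtype) := by
  intro k hk x hx
  obtain ⟨b, hb, rfl⟩ := hx
  exact ⟨⟨k, hk⟩ * b * ⟨k, hk⟩⁻¹, hB.conj_mem b hb ⟨k, hk⟩, rfl⟩

lemma map_subtype_eq_self {K B : Subgroup G} (h : B ≤ K) :
    (B.subgroupOf K).map K.subtype = B := by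
  rw [Subgroup.subgroupOf_map_subtype, inf_eq_left.mpr h]

lemma minNormalIn_map {K : Subgroup G} {B : Subgroup ↥K} (hB : IsMinimalNormal B) :
    MinNormalIn K (B.map K.subtype) := by
  obtain ⟨hne, hnorm, hmin⟩ := hB
  refine ⟨?_, Subgroup.map_subtype_le B, conjInvIn_of_map_normal hnorm, ?_⟩
  · exact fun h => hne ((B.map_eq_bot_iff_of_injective K.subtype_injective).mp h)
  · intro B' hB' hB'c
    have hB'K : B' ≤ K := hB'.trans (Subgroup.map_subtype_le B)
    have hsub : B'.subgroupOf K ≤ B := by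
      intro x hx
      rw [Subgroup.mem_subgroupOf] at hx
      obtain ⟨b, hb, hbe⟩ := hB' hx
      have : b = x := Subtype.ext hbe
      rwa [← this]
    rcases hmin (B'.subgroupOf K) (subgroupOf_normal_of_conjInvIn hB'c) hsub with h | h
    · left
      rw [← map_subtype_eq_self hB'K, h, Subgroup.map_bot]
    · right
      rw [← map_subtype_eq_self hB'K, h]

lemma minNormalIn_subgroupOf {K B : Subgroup G} (h : MinNormalIn K B) :
    IsMinimalNormal (B.subgroupOf K) := by
  obtain ⟨hne, hle, hconj, hmin⟩ := h
  refine ⟨?_, subgroupOf_normal_of_conjInvIn hconj, ?_⟩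
  · intro hbot
    exact hne (by rw [← map_subtype_eq_self hle, hbot, Subgroup.map_bot])
  · intro M hM hMle
    have h1 : M.map K.subtype ≤ B := by
      calc M.map K.subtype ≤ (B.subgroupOf K).map K.subtype :=
            Subgroup.map_mono hMle
        _ = B := map_subtype_eq_self hle
    rcases hmin (M.map K.subtype) h1 (conjInvIn_of_map_normal hM) with h2 | h2
    · left
      exact Subgroup.map_injective K.subtype_injective (by rw [h2, Subgroup.map_bot])
    · right
      apply Subgroup.map_injective K.subtype_injective
      rw [h2, map_subtype_eq_self hle]

lemma le_socle {M : Subgroup G} (hM : IsMinimalNormal M) : M ≤ socle G :=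
  le_iSup₂ (f := fun (N : Subgroup G) (_ : N ∈ {N : Subgroup G | IsMinimalNormal N}) => N) M hM

lemma minNormalIn_le_socmap {K B : Subgroup G} (h : MinNormalIn K B) :
    B ≤ (socle ↥K).map K.subtype := by
  have h2 := map_subtype_eq_self h.2.1
  calc B = (B.subgroupOf K).map K.subtype := h2.symm
    _ ≤ (socle ↥K).map K.subtype := Subgroup.map_mono (le_socle (minNormalIn_subgroupOf h))

end Aux
section Aux2

variable {G : Type*} [Group G]

/-- Conjugate of a subgroup. -/
def conjS (g : G) (B : Subgroup G) : Subgroup G := B.map (MulAut.conj g).toMonoidHom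

lemma mem_conjS {g x : G} {B : Subgroup G} : x ∈ conjS g B ↔ g⁻¹ * x * g ∈ B := by
  rw [conjS, Subgroup.mem_map_equiv, MulAut.conj_symm_apply]

lemma conjS_conjS_inv (g : G) (B : Subgroup G) : conjS g (conjS g⁻¹ B) = B := by
  ext x
  rw [mem_conjS, mem_conjS]
  constructor
  · intro h
    have : g * (g⁻¹ * x * g) * g⁻¹ = x := by group
    rwa [inv_inv, this] at h
  · intro h
    rw [inv_inv]
    have : g * (g⁻¹ * x * g) * g⁻¹ = x := by group
    rwa [this]

lemma conjS_bot (g : G) : conjS g (⊥ : Subgroup G) = ⊥ := by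
  ext x
  rw [mem_conjS, Subgroup.mem_bot, Subgroup.mem_bot]
  constructor
  · intro h
    have : g * (g⁻¹ * x * g) * g⁻¹ = x := by group
    rw [← this, h]
    group
  · rintro rfl; group

lemma mem_conjS_of_mem {g : G} {B : Subgroup G} {b : G} (hb : b ∈ B) :
    g * b * g⁻¹ ∈ conjS g B := by
  rw [mem_conjS]
  have : g⁻¹ * (g * b * g⁻¹) * g = b := by group
  rwa [this]

lemma minNormalIn_conjS {K B : Subgroup G} (hK : K.Normal) (h : MinNormalIn K B) (g : G) :
    MinNormalIn K (conjS g B) := by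
  obtain ⟨hne, hle, hconj, hmin⟩ := h
  refine ⟨?_, ?_, ?_, ?_⟩
  · intro hbot
    apply hne
    rw [Subgroup.eq_bot_iff_forall] at hbot ⊢
    intro b hb
    have h2 := hbot _ (mem_conjS_of_mem (g := g) hb)
    have he : g⁻¹ * (g * b * g⁻¹) * g = b := by group
    rw [← he, h2]
    group
  · intro x hx
    rw [mem_conjS] at hx
    have := hK.conj_mem _ (hle hx) g
    have he : g * (g⁻¹ * x * g) * g⁻¹ = x := by group
    rwa [he] at this
  · intro k hk x hx
    rw [mem_conjS] at hx ⊢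
    have hk' : g⁻¹ * k * g ∈ K := by
      have := hK.conj_mem _ hk g⁻¹
      simpa using this
    have := hconj _ hk' _ hx
    have he : (g⁻¹ * k * g) * (g⁻¹ * x * g) * (g⁻¹ * k * g)⁻¹ = g⁻¹ * (k * x * k⁻¹) * g := by
      group
    rwa [he] at this
  · intro B' hB' hB'c
    have h1 : conjS g⁻¹ B' ≤ B := by
      intro x hx
      rw [mem_conjS, inv_inv] at hx
      have := hB' hx
      rw [mem_conjS] at this
      have he : g⁻¹ * (g * x * g⁻¹) * g = x := by group
      rwa [he] at this
    have h2 : ConjInvIn K (conjS g⁻¹ B') := by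
      intro k hk x hx
      rw [mem_conjS, inv_inv] at hx ⊢
      have hk' : g * k * g⁻¹ ∈ K := hK.conj_mem _ hk g
      have := hB'c _ hk' _ hx
      have he : (g * k * g⁻¹) * (g * x * g⁻¹) * (g * k * g⁻¹)⁻¹ = g * (k * x * k⁻¹) * g⁻¹ := by
        group
      rwa [he] at this
    rcases hmin _ h1 h2 with h3 | h3
    · left
      have := congrArg (conjS g) h3
      rwa [conjS_conjS_inv, conjS_bot] at this
    · right
      have := congrArg (conjS g) h3
      rwa [conjS_conjS_inv] at this

end Aux2
section Aux3

variable {G : Type*} [Group G]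

lemma normal_inf {A B : Subgroup G} (hA : A.Normal) (hB : B.Normal) : (A ⊓ B).Normal := by
  constructor
  intro n hn g
  rw [Subgroup.mem_inf] at hn ⊢
  exact ⟨hA.conj_mem _ hn.1 g, hB.conj_mem _ hn.2 g⟩

lemma exists_isMinimalNormal_le [Finite G] {K : Subgroup G} (hne : K ≠ ⊥) (hn : K.Normal) :
    ∃ M : Subgroup G, IsMinimalNormal M ∧ M ≤ K := by
  have hwf : WellFoundedLT (Subgroup G) := Finite.to_wellFoundedLT
  obtain ⟨M, hM, hmin⟩ := hwf.wf.has_min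
    {M : Subgroup G | M ≠ ⊥ ∧ M.Normal ∧ M ≤ K} ⟨K, hne, hn, le_refl K⟩
  refine ⟨M, ⟨hM.1, hM.2.1, ?_⟩, hM.2.2⟩
  intro M' hM'n hM'le
  by_cases h : M' = ⊥
  · exact Or.inl h
  · right
    by_contra hne'
    exact hmin M' ⟨h, hM'n, hM'le.trans hM.2.2⟩ (lt_of_le_of_ne hM'le hne')

lemma exists_minNormalIn_le [Finite G] {K M : Subgroup G} (hne : M ≠ ⊥) (hle : M ≤ K)
    (hconj : ConjInvIn K M) : ∃ B : Subgroup G, MinNormalIn K B ∧ B ≤ M := by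
  have h1 : M.subgroupOf K ≠ ⊥ := by
    intro h
    exact hne (by rw [← map_subtype_eq_self hle, h, Subgroup.map_bot])
  obtain ⟨B₀, hB₀, hB₀le⟩ := exists_isMinimalNormal_le h1 (subgroupOf_normal_of_conjInvIn hconj)
  refine ⟨B₀.map K.subtype, minNormalIn_map hB₀, ?_⟩
  calc B₀.map K.subtype ≤ (M.subgroupOf K).map K.subtype := Subgroup.map_mono hB₀le
    _ = M := map_subtype_eq_self hle

lemma comm_of_disjoint {A B : Subgroup G} (hA : ∀ y ∈ B, ∀ x ∈ A, y * x * y⁻¹ ∈ A)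
    (hB : ∀ x ∈ A, ∀ y ∈ B, x * y * x⁻¹ ∈ B) (h : A ⊓ B = ⊥) :
    ∀ x ∈ A, ∀ y ∈ B, x * y = y * x := by
  intro x hx y hy
  have hc1 : x * y * x⁻¹ * y⁻¹ ∈ B := mul_mem (hB x hx y hy) (inv_mem hy)
  have hc2 : x * y * x⁻¹ * y⁻¹ ∈ A := by
    have h2 : y * x⁻¹ * y⁻¹ ∈ A := hA y hy x⁻¹ (inv_mem hx)
    have h3 : x * (y * x⁻¹ * y⁻¹) ∈ A := mul_mem hx h2
    have he : x * (y * x⁻¹ * y⁻¹) = x * y * x⁻¹ * y⁻¹ := by group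
    rwa [he] at h3
  have hc : x * y * x⁻¹ * y⁻¹ = 1 := by
    have := Subgroup.mem_inf.mpr ⟨hc2, hc1⟩
    rwa [h, Subgroup.mem_bot] at this
  have he : x * y * (y * x)⁻¹ = x * y * x⁻¹ * y⁻¹ := by group
  have := he.trans hc
  exact mul_inv_eq_one.mp this

lemma centralizer_normal_of_normal {M : Subgroup G} (hM : M.Normal) :
    (Subgroup.centralizer (M : Set G)).Normal := by
  constructor
  intro n hn g
  rw [Subgroup.mem_centralizer_iff] at hn ⊢
  intro m hm
  have h1 : g⁻¹ * m * g ∈ M := by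
    have := hM.conj_mem _ hm g⁻¹
    simpa using this
  have h2 := hn _ h1
  calc m * (g * n * g⁻¹) = g * ((g⁻¹ * m * g) * n) * g⁻¹ := by group
    _ = g * (n * (g⁻¹ * m * g)) * g⁻¹ := by rw [h2]
    _ = g * n * g⁻¹ * m := by group

lemma ff_inf_centralizer (hG : FittingFree G) {M : Subgroup G} (hM : M.Normal) :
    M ⊓ Subgroup.centralizer (M : Set G) = ⊥ := by
  apply hG
  · exact normal_inf hM (centralizer_normal_of_normal hM)
  · constructor
    constructor
    intro a b
    apply Subtype.ext
    have ha := a.2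
    have hb := b.2
    rw [Subgroup.mem_inf] at ha hb
    have := Subgroup.mem_centralizer_iff.mp hb.2 _ ha.1
    exact this

lemma socle_normal : (socle G).Normal := by
  constructor
  intro n hn g
  rw [socle] at hn ⊢
  refine Subgroup.iSup_induction _ (C := fun x => g * x * g⁻¹ ∈
    ⨆ N ∈ {N : Subgroup G | IsMinimalNormal N}, N) hn ?_ (by simpa using one_mem _) ?_
  · intro N x hx
    by_cases hN : N ∈ {N : Subgroup G | IsMinimalNormal N}
    · rw [iSup_pos hN] at hx
      have hN' : IsMinimalNormal N := hN
      have h2 : g * x * g⁻¹ ∈ N := hN'.2.1.conj_mem _ hx g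
      exact le_iSup₂ (f := fun (N : Subgroup G) (_ : N ∈ {N : Subgroup G | IsMinimalNormal N}) => N)
        N hN h2
    · rw [iSup_neg hN] at hx
      rw [Subgroup.mem_bot] at hx
      subst hx
      simpa using one_mem _
  · intro x y hx hy
    have he : g * (x * y) * g⁻¹ = (g * x * g⁻¹) * (g * y * g⁻¹) := by group
    rw [he]
    exact mul_mem hx hy

lemma socmap_eq_iSup (K : Subgroup G) : (socle ↥K).map K.subtype =
    ⨆ B : Subgroup ↥K, ⨆ _ : IsMinimalNormal B, B.map K.subtype := by
  rw [socle, Subgroup.map_iSup]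
  apply iSup_congr
  intro B
  rw [Subgroup.map_iSup]
  rfl

lemma socmap_normal {K : Subgroup G} (hK : K.Normal) : ((socle ↥K).map K.subtype).Normal := by
  constructor
  intro n hn g
  rw [socmap_eq_iSup] at hn
  refine Subgroup.iSup_induction _ (C := fun x => g * x * g⁻¹ ∈ (socle ↥K).map K.subtype)
    hn ?_ (by simpa using one_mem _) ?_
  · intro B x hx
    by_cases hB : IsMinimalNormal B
    · rw [iSup_pos hB] at hx
      have h1 : MinNormalIn K (conjS g (B.map K.subtype)) :=
        minNormalIn_conjS hK (minNormalIn_map hB) g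
      have h2 : g * x * g⁻¹ ∈ conjS g (B.map K.subtype) := mem_conjS_of_mem hx
      exact minNormalIn_le_socmap h1 h2
    · rw [iSup_neg hB, Subgroup.mem_bot] at hx
      subst hx
      simpa using one_mem _
  · intro x y hx hy
    have he : g * (x * y) * g⁻¹ = (g * x * g⁻¹) * (g * y * g⁻¹) := by group
    rw [he]
    exact mul_mem hx hy

end Aux3
lemma minNormalIn_le_socle {G : Type*} [Group G] [Finite G] (hG : FittingFree G)
    {K B : Subgroup G} (hK : K.Normal) (hB : MinNormalIn K B) : B ≤ socle G := by
  obtain ⟨hne, hleK, hconj, hmin⟩ := hB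
  set M := Subgroup.normalClosure (B : Set G) with hMdef
  haveI hMnormal : M.Normal := Subgroup.normalClosure_normal
  have hBM : B ≤ M := Subgroup.le_normalClosure
  have hMK : M ≤ K := by
    haveI := hK
    exact Subgroup.normalClosure_le_normal hleK
  have hMne : M ≠ ⊥ := fun h => hne (le_bot_iff.mp (h ▸ hBM))
  obtain ⟨M1, hM1, hM1M⟩ := exists_isMinimalNormal_le hMne hMnormal
  by_cases hc : ∃ g : G, ¬ (conjS g B ⊓ M1 = ⊥)
  · obtain ⟨g, hg⟩ := hc
    have hCg := minNormalIn_conjS hK ⟨hne, hleK, hconj, hmin⟩ g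
    have h1 : ConjInvIn K (conjS g B ⊓ M1) := by
      intro k hk x hx
      rw [Subgroup.mem_inf] at hx ⊢
      exact ⟨hCg.2.2.1 k hk x hx.1, hM1.2.1.conj_mem _ hx.2 k⟩
    rcases hCg.2.2.2 _ inf_le_left h1 with h2 | h2
    · exact absurd h2 hg
    · have h3 : conjS g B ≤ M1 := by rw [← h2]; exact inf_le_right
      have h4 : B ≤ M1 := by
        intro b hb
        have h5 : g * b * g⁻¹ ∈ M1 := h3 (mem_conjS_of_mem hb)
        have h6 := hM1.2.1.conj_mem _ h5 g⁻¹
        have he : g⁻¹ * (g * b * g⁻¹) * g⁻¹⁻¹ = b := by group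
        rwa [he] at h6
      exact h4.trans (le_socle hM1)
  · push_neg at hc
    exfalso
    have hcomm : ∀ g : G, ∀ x ∈ M1, ∀ y ∈ conjS g B, x * y = y * x := by
      intro g
      apply comm_of_disjoint (A := M1) (B := conjS g B)
      · intro y _hy x hx
        exact hM1.2.1.conj_mem _ hx y
      · intro x hx y hy
        have hCg := minNormalIn_conjS hK ⟨hne, hleK, hconj, hmin⟩ g
        exact hCg.2.2.1 x (hMK (hM1M hx)) y hy
      · rw [inf_comm]; exact hc g
    have hMle : M ≤ Subgroup.centralizer (M1 : Set G) := by
      haveI : (Subgroup.centralizer (M1 : Set G)).Normal :=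
        centralizer_normal_of_normal hM1.2.1
      apply Subgroup.normalClosure_le_normal
      intro b hb
      rw [SetLike.mem_coe, Subgroup.mem_centralizer_iff]
      intro x hx
      have hbB : b ∈ conjS 1 B := by
        rw [mem_conjS]; simpa using hb
      exact hcomm 1 x hx b hbB
    have hM1le : M1 ≤ Subgroup.centralizer (M : Set G) := by
      intro x hx
      rw [Subgroup.mem_centralizer_iff]
      intro y hy
      exact (Subgroup.mem_centralizer_iff.mp (hMle hy) x hx).symm
    have hfin : M1 ≤ M ⊓ Subgroup.centralizer (M : Set G) := le_inf hM1M hM1le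
    rw [ff_inf_centralizer hG hMnormal] at hfin
    exact hM1.1 (le_bot_iff.mp hfin)

theorem stmt4 {G : Type*} [Group G] [Finite G] (hG : FittingFree G)
    (N : Subgroup G) (hN : N.Normal) :
    ∀ S1 : Subgroup G, S1 = (socle ↥N).map N.subtype →
    ∀ C : Subgroup G, C = Subgroup.centralizer (S1 : Set G) →
    ∀ S2 : Subgroup G, S2 = (socle ↥C).map C.subtype →
    (∀ x ∈ S1, ∀ y ∈ S2, Commute x y) ∧ S1 ⊓ S2 = ⊥ ∧ S1 ⊔ S2 = socle G := by
  intro S1 hS1 C hC S2 hS2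
  have hS1le : S1 ≤ N := by rw [hS1]; exact Subgroup.map_subtype_le _
  have hS1norm : S1.Normal := by rw [hS1]; exact socmap_normal hN
  have hCnorm : C.Normal := by rw [hC]; exact centralizer_normal_of_normal hS1norm
  have hS2le : S2 ≤ C := by rw [hS2]; exact Subgroup.map_subtype_le _
  have hS2norm : S2.Normal := by rw [hS2]; exact socmap_normal hCnorm
  refine ⟨?_, ?_, ?_⟩
  · intro x hx y hy
    exact Subgroup.mem_centralizer_iff.mp (hC ▸ hS2le hy) x hx
  · rw [eq_bot_iff]
    intro x hx
    rw [Subgroup.mem_inf] at hx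
    have h1 : x ∈ S1 ⊓ Subgroup.centralizer (S1 : Set G) :=
      Subgroup.mem_inf.mpr ⟨hx.1, hC ▸ hS2le hx.2⟩
    rwa [ff_inf_centralizer hG hS1norm] at h1
  · apply le_antisymm
    · apply sup_le
      · rw [hS1, socmap_eq_iSup]
        exact iSup₂_le fun B hB => minNormalIn_le_socle hG hN (minNormalIn_map hB)
      · rw [hS2, socmap_eq_iSup]
        exact iSup₂_le fun B hB => minNormalIn_le_socle hG hCnorm (minNormalIn_map hB)
    · rw [socle]
      refine iSup₂_le ?_
      intro M hM
      have hM : IsMinimalNormal M := hM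
      have hMnorm := hM.2.1
      rcases hM.2.2 (M ⊓ N) (normal_inf hMnorm hN) inf_le_left with h1 | h1
      · -- M ⊓ N = ⊥ : M ≤ C, then M ≤ S2
        have hMC : M ≤ C := by
          rw [hC]
          intro x hx
          rw [Subgroup.mem_centralizer_iff]
          intro h hh
          have hcomm := comm_of_disjoint (A := M) (B := N)
            (fun y _hy x hx => hMnorm.conj_mem _ hx y)
            (fun x _hx y hy => hN.conj_mem _ hy x) h1
          exact (hcomm x hx h (hS1le hh)).symm
        rcases hM.2.2 (M ⊓ S2) (normal_inf hMnorm hS2norm) inf_le_left with h2 | h2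
        · exfalso
          obtain ⟨B, hB, hBle⟩ := exists_minNormalIn_le hM.1 hMC
            (fun k _ x hx => hMnorm.conj_mem _ hx k)
          have hBS2 : B ≤ S2 := by rw [hS2]; exact minNormalIn_le_socmap hB
          have hfin : B ≤ M ⊓ S2 := le_inf hBle hBS2
          rw [h2] at hfin
          exact hB.1 (le_bot_iff.mp hfin)
        · have hfin : M ≤ S2 := by rw [← h2]; exact inf_le_right
          exact hfin.trans le_sup_right
      · -- M ≤ N, then M ≤ S1
        have hMN : M ≤ N := by rw [← h1]; exact inf_le_right
        rcases hM.2.2 (M ⊓ S1) (normal_inf hMnorm hS1norm) inf_le_left with h2 | h2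
        · exfalso
          obtain ⟨B, hB, hBle⟩ := exists_minNormalIn_le hM.1 hMN
            (fun k _ x hx => hMnorm.conj_mem _ hx k)
          have hBS1 : B ≤ S1 := by rw [hS1]; exact minNormalIn_le_socmap hB
          have hfin : B ≤ M ⊓ S1 := le_inf hBle hBS1
          rw [h2] at hfin
          exact hB.1 (le_bot_iff.mp hfin)
        · have hfin : M ≤ S1 := by rw [← h2]; exact inf_le_right
          exact hfin.trans le_sup_left
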